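/- Fix m ≥ 1 and α ∈ [0,1]. Let p_1,...,p_m be independent random variables all supported on the grid {1/L, 2/L, ..., (L−1)/L, 1}, with p_i ~ Uniform{1/L,...,L/L} whenever the i-th null is true, and let m_0 be the number of true nulls, π̄_0 := m_0/m. Let R_α := argmax_{k ∈ {0,...,m}} (αk/m − p_(k)) (p_(0) := 0), with ties in the ordering of equal p-values broken uniformly at random, and let bFDR(R_α) be the probability that R_α ≥ 1 and the p-value of rank R_α belongs to a true null. Then there exist a constant C and a threshold L_0 (depending only on m and α) such that for all L ≥ L_0 and all choices of the non-null distributions on the grid, bFDR(R_α) ≤ π̄_0 α + C m²/L; i.e., bFDR(R_α) ≤ π̄_0 α + O(m²/L) as L → ∞. -/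

import Mathlib

open MeasureTheory ProbabilityTheory Filter Set

/-- The `k`-th order statistic of the values `v 0, ..., v (m-1)`. -/
noncomputable def orderStat {m : ℕ} (v : Fin m → ℝ) (k : ℕ) : ℝ :=
  if k = 0 then 0
  else sInf {x : ℝ | k ≤ (Finset.univ.filter (fun i => v i ≤ x)).card}

/-- The support-line objective `k ↦ α k / m − p_(k)`. -/
noncomputable def slObj (α : ℝ) {m : ℕ} (v : Fin m → ℝ) (k : ℕ) : ℝ :=
  α * (k : ℝ) / (m : ℝ) - orderStat v k

/-- The number of rejections `R_α` of the support-line procedure at level `α`. -/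
noncomputable def slR (α : ℝ) {m : ℕ} (v : Fin m → ℝ) : ℕ :=
  sSup {k : ℕ | k ≤ m ∧ ∀ j ≤ m, slObj α v j ≤ slObj α v k}

/-- The rejection threshold `τ̂_α = p_(R_α)` of the support-line procedure. -/
noncomputable def slTau (α : ℝ) {m : ℕ} (v : Fin m → ℝ) : ℝ :=
  orderStat v (slR α v)


/-- The boundary FDR of the support-line procedure with ties among equal p-values
broken uniformly at random: the probability that at least one rejection is made and
the boundary rejection is a true null, i.e. the expectation of
`1{R_α ≥ 1} · #{nulls at the threshold} / #{p-values at the threshold}`. -/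
noncomputable def bFDRsl {Ω : Type} [MeasurableSpace Ω] (μ : Measure Ω)
    {m : ℕ} (p : Fin m → Ω → ℝ) (H0 : Finset (Fin m)) (α : ℝ) : ℝ :=
  ∫ ω, (if 1 ≤ slR α (fun i => p i ω) then
      ({i : Fin m | i ∈ H0 ∧ p i ω = slTau α (fun i => p i ω)}.ncard : ℝ)
        / ({i : Fin m | p i ω = slTau α (fun i => p i ω)}.ncard : ℝ)
    else 0) ∂μ

namespace Stmt11Aux

/-- number of coordinates with value `≤ y` -/
noncomputable def cntLE {m : ℕ} (v : Fin m → ℝ) (y : ℝ) : ℕ :=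
  (Finset.univ.filter (fun j => v j ≤ y)).card

lemma orderStat_eq {m : ℕ} (v : Fin m → ℝ) {k : ℕ} (hk : 1 ≤ k) :
    orderStat v k = sInf {x : ℝ | k ≤ cntLE v x} := by
  rw [orderStat, if_neg (by omega)]; rfl

lemma cntLE_le {m : ℕ} (v : Fin m → ℝ) (y : ℝ) : cntLE v y ≤ m := by
  simpa [cntLE] using Finset.card_filter_le (Finset.univ : Finset (Fin m)) _

lemma cntLE_mono {m : ℕ} (v : Fin m → ℝ) {y z : ℝ} (h : y ≤ z) : cntLE v y ≤ cntLE v z := by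
  apply Finset.card_le_card
  intro j hj
  simp only [Finset.mem_filter, Finset.mem_univ, true_and] at hj ⊢
  exact hj.trans h

lemma exists_le_of_cnt {m : ℕ} {v : Fin m → ℝ} {y : ℝ} (h : 1 ≤ cntLE v y) :
    ∃ j, v j ≤ y := by
  obtain ⟨j, hj⟩ := Finset.card_pos.1 h
  simp only [Finset.mem_filter, Finset.mem_univ, true_and] at hj
  exact ⟨j, hj⟩

lemma bddBelow_S {m : ℕ} (v : Fin m → ℝ) {k : ℕ} (hk : 1 ≤ k) :
    BddBelow {x : ℝ | k ≤ cntLE v x} := by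
  rcases isEmpty_or_nonempty (Fin m) with hme | hme
  · suffices h : {x : ℝ | k ≤ cntLE v x} = ∅ by rw [h]; exact bddBelow_empty
    ext y
    simp only [Set.mem_setOf_eq, Set.mem_empty_iff_false, iff_false]
    intro hy
    obtain ⟨j, _⟩ := exists_le_of_cnt (le_trans hk hy)
    exact hme.elim j
  · refine ⟨(Finset.univ.image v).min' (Finset.univ_nonempty.image v), ?_⟩
    intro y hy
    obtain ⟨j, hj⟩ := exists_le_of_cnt (le_trans hk hy)
    exact le_trans (Finset.min'_le _ _ (Finset.mem_image_of_mem v (Finset.mem_univ j))) hj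

lemma orderStat_le_of {m : ℕ} {v : Fin m → ℝ} {k : ℕ} {y : ℝ} (hk : 1 ≤ k)
    (h : k ≤ cntLE v y) : orderStat v k ≤ y := by
  rw [orderStat_eq v hk]
  exact csInf_le (bddBelow_S v hk) h

lemma orderStat_attained {m : ℕ} (v : Fin m → ℝ) {k : ℕ} (hk : 1 ≤ k) (hkm : k ≤ m) :
    k ≤ cntLE v (orderStat v k) := by
  haveI : Nonempty (Fin m) := Fin.pos_iff_nonempty.1 (by omega)
  have hIne : (Finset.univ.image v).Nonempty := Finset.univ_nonempty.image v
  have hmax : ∀ j, v j ≤ (Finset.univ.image v).max' hIne := fun j =>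
    Finset.le_max' _ _ (Finset.mem_image_of_mem v (Finset.mem_univ j))
  have hcM : cntLE v ((Finset.univ.image v).max' hIne) = m := by
    rw [cntLE, Finset.filter_true_of_mem (fun j _ => hmax j), Finset.card_univ, Fintype.card_fin]
  have hTne : ((Finset.univ.image v).filter (fun t => k ≤ cntLE v t)).Nonempty := by
    refine ⟨(Finset.univ.image v).max' hIne, ?_⟩
    simp only [Finset.mem_filter]
    exact ⟨(Finset.univ.image v).max'_mem hIne, by rw [hcM]; exact hkm⟩
  obtain ⟨t, ht_mem, ht_min⟩ : ∃ t ∈ (Finset.univ.image v).filter (fun t => k ≤ cntLE v t),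
      ∀ z ∈ (Finset.univ.image v).filter (fun t => k ≤ cntLE v t), t ≤ z :=
    ⟨_, Finset.min'_mem _ hTne, fun z hz => Finset.min'_le _ z hz⟩
  have ht1 : k ≤ cntLE v t := (Finset.mem_filter.1 ht_mem).2
  have ht2 : ∀ y, k ≤ cntLE v y → t ≤ y := by
    intro y hy
    have h1 : ((Finset.univ.image v).filter (fun t => t ≤ y)).Nonempty := by
      obtain ⟨j, hj⟩ := exists_le_of_cnt (le_trans hk hy)
      refine ⟨v j, ?_⟩
      simp only [Finset.mem_filter]
      exact ⟨Finset.mem_image_of_mem v (Finset.mem_univ j), hj⟩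
    obtain ⟨u, hu_mem, hu_max⟩ : ∃ u ∈ (Finset.univ.image v).filter (fun t => t ≤ y),
        ∀ z ∈ (Finset.univ.image v).filter (fun t => t ≤ y), z ≤ u :=
      ⟨_, Finset.max'_mem _ h1, fun z hz => Finset.le_max' _ z hz⟩
    have hu_img : u ∈ Finset.univ.image v := (Finset.mem_filter.1 hu_mem).1
    have huy : u ≤ y := (Finset.mem_filter.1 hu_mem).2
    have hcu : k ≤ cntLE v u := by
      refine le_trans hy (Finset.card_le_card ?_)
      intro j hj
      simp only [Finset.mem_filter, Finset.mem_univ, true_and] at hj ⊢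
      refine hu_max (v j) ?_
      simp only [Finset.mem_filter]
      exact ⟨Finset.mem_image_of_mem v (Finset.mem_univ j), hj⟩
    refine le_trans (ht_min u ?_) huy
    simp only [Finset.mem_filter]
    exact ⟨hu_img, hcu⟩
  have : orderStat v k = t := by
    rw [orderStat_eq v hk]
    exact le_antisymm (csInf_le (bddBelow_S v hk) ht1) (le_csInf ⟨t, ht1⟩ (fun y hy => ht2 y hy))
  rw [this]; exact ht1

lemma orderStat_cnt_self {m : ℕ} {v : Fin m → ℝ} {i : Fin m} {x : ℝ} (hx : v i = x) :
    orderStat v (cntLE v x) = x := by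
  have hk : 1 ≤ cntLE v x :=
    Finset.card_pos.2 ⟨i, Finset.mem_filter.2 ⟨Finset.mem_univ i, le_of_eq hx⟩⟩
  refine le_antisymm (orderStat_le_of hk le_rfl) ?_
  rw [orderStat_eq v hk]
  refine le_csInf ⟨x, show cntLE v x ≤ cntLE v x from le_rfl⟩ ?_
  intro y hy
  by_contra hlt
  push_neg at hlt
  have hsub : Finset.univ.filter (fun j => v j ≤ y)
      ⊆ (Finset.univ.filter (fun j => v j ≤ x)).erase i := by
    intro j hj
    simp only [Finset.mem_filter, Finset.mem_univ, true_and] at hj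
    refine Finset.mem_erase.2 ⟨?_, Finset.mem_filter.2 ⟨Finset.mem_univ j, le_trans hj hlt.le⟩⟩
    rintro rfl
    exact absurd (hx ▸ hj) (not_le.2 hlt)
  have hmemi : i ∈ Finset.univ.filter (fun j => v j ≤ x) := by
    simp only [Finset.mem_filter]; exact ⟨Finset.mem_univ i, le_of_eq hx⟩
  have := Finset.card_le_card hsub
  rw [Finset.card_erase_of_mem hmemi] at this
  have hy' : cntLE v x ≤ cntLE v y := hy
  simp only [cntLE] at hy' this hk
  omega

lemma slR_spec (α : ℝ) {m : ℕ} (v : Fin m → ℝ) :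
    slR α v ≤ m ∧ ∀ j ≤ m, slObj α v j ≤ slObj α v (slR α v) := by
  have hne : {k : ℕ | k ≤ m ∧ ∀ j ≤ m, slObj α v j ≤ slObj α v k}.Nonempty := by
    obtain ⟨k, hk, hmax⟩ := Finset.exists_max_image (Finset.range (m+1)) (slObj α v)
      ⟨0, by simp⟩
    rw [Finset.mem_range, Nat.lt_succ_iff] at hk
    exact ⟨k, hk, fun j hj => hmax j (Finset.mem_range.2 (Nat.lt_succ_iff.2 hj))⟩
  have hbdd : BddAbove {k : ℕ | k ≤ m ∧ ∀ j ≤ m, slObj α v j ≤ slObj α v k} :=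
    ⟨m, fun x hx => hx.1⟩
  have hmem := Nat.sSup_mem hne hbdd
  exact ⟨hmem.1, hmem.2⟩

/-- On the event that the boundary rejection is coordinate `i`, the objective is maximized
at the top rank of the tie block of `w i`. -/
lemma event_max {α : ℝ} (hα : 0 ≤ α) {m : ℕ} {w : Fin m → ℝ} {i : Fin m}
    (hR : 1 ≤ slR α w) (hτ : w i = slTau α w) :
    ∀ j ≤ m, slObj α w j ≤ α * (cntLE w (w i) : ℝ) / m - w i := by
  obtain ⟨hRm, hmax⟩ := slR_spec α w
  have hτ' : orderStat w (slR α w) = w i := hτ.symm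
  have hatt : slR α w ≤ cntLE w (w i) := by
    have := orderStat_attained w hR hRm
    rwa [hτ'] at this
  intro j hj
  refine le_trans (hmax j hj) ?_
  rw [slObj, hτ']
  have hm0 : (0:ℝ) < m := by exact_mod_cast i.pos
  have h1 : α * (slR α w : ℝ) / m ≤ α * (cntLE w (w i) : ℝ) / m := by
    refine (div_le_div_iff_of_pos_right hm0).2 ?_
    exact mul_le_mul_of_nonneg_left (Nat.cast_le.2 hatt) hα
  linarith [h1]

/-- grid point `(a+1)/L`. -/
noncomputable def gridPt (L : ℕ) (a : Fin L) : ℝ := ((a : ℕ) + 1 : ℝ) / L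

/-- number of off-`i` coordinates with value `≤ y`. -/
noncomputable def cOff {m : ℕ} (v : Fin m → ℝ) (i : Fin m) (y : ℝ) : ℕ :=
  (Finset.univ.filter (fun j => j ≠ i ∧ v j ≤ y)).card

/-- the event that coordinate `i` is the boundary rejection. -/
def isBd (α : ℝ) {m : ℕ} (w : Fin m → ℝ) (i : Fin m) : Prop :=
  1 ≤ slR α w ∧ w i = slTau α w

noncomputable instance {α : ℝ} {m : ℕ} (w : Fin m → ℝ) (i : Fin m) : Decidable (isBd α w i) :=
  inferInstanceAs (Decidable (_ ∧ _))

lemma cntLE_update_le {m : ℕ} (v : Fin m → ℝ) (i : Fin m) {x y : ℝ} (hxy : x ≤ y) :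
    cntLE (Function.update v i x) y = cOff v i y + 1 := by
  have he : Finset.univ.filter (fun j => Function.update v i x j ≤ y)
      = insert i (Finset.univ.filter (fun j => j ≠ i ∧ v j ≤ y)) := by
    ext j
    by_cases hj : j = i
    · subst hj
      simp [Function.update_self, hxy]
    · simp [Finset.mem_filter, Finset.mem_insert, hj, Function.update_of_ne hj]
  rw [cntLE, he, Finset.card_insert_of_notMem (by simp), cOff]

lemma le_cntLE_update {m : ℕ} (v : Fin m → ℝ) (i : Fin m) (x y : ℝ) :
    cOff v i y ≤ cntLE (Function.update v i x) y := by
  apply Finset.card_le_card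
  intro j hj
  simp only [Finset.mem_filter, Finset.mem_univ, true_and] at hj ⊢
  rw [Function.update_of_ne hj.1]
  exact hj.2

lemma cOff_le {m : ℕ} (v : Fin m → ℝ) (i : Fin m) (y : ℝ) : cOff v i y + 1 ≤ m := by
  have hsub : Finset.univ.filter (fun j => j ≠ i ∧ v j ≤ y) ⊆ Finset.univ.erase i := by
    intro j hj
    simp only [Finset.mem_filter] at hj
    exact Finset.mem_erase.2 ⟨hj.2.1, Finset.mem_univ j⟩
  have h2 := Finset.card_le_card hsub
  rw [Finset.card_erase_of_mem (Finset.mem_univ i), Finset.card_univ, Fintype.card_fin] at h2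
  have hm := i.pos
  rw [cOff]
  omega

lemma cOff_mono {m : ℕ} (v : Fin m → ℝ) (i : Fin m) {y z : ℝ} (h : y ≤ z) :
    cOff v i y ≤ cOff v i z := by
  apply Finset.card_le_card
  intro j hj
  simp only [Finset.mem_filter, Finset.mem_univ, true_and] at hj ⊢
  exact ⟨hj.1, hj.2.trans h⟩

lemma event_max' {α : ℝ} (hα : 0 ≤ α) {m : ℕ} {v : Fin m → ℝ} {i : Fin m} {t : ℝ}
    (h : isBd α (Function.update v i t) i) :
    ∀ j ≤ m, slObj α (Function.update v i t) j
      ≤ α * ((cOff v i t + 1 : ℕ) : ℝ) / m - t := by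
  have h2 := event_max hα h.1 h.2
  have h3 : cntLE (Function.update v i t) (Function.update v i t i) = cOff v i t + 1 := by
    rw [Function.update_self]
    exact cntLE_update_le v i le_rfl
  intro j hj
  have h4 := h2 j hj
  rw [h3, Function.update_self] at h4
  exact h4

lemma pair_le {α : ℝ} (hα : 0 ≤ α) {m : ℕ} {v : Fin m → ℝ} {i : Fin m} {s t : ℝ}
    (hs0 : 0 < s) (hst : s ≤ t)
    (hs : isBd α (Function.update v i s) i) (ht : isBd α (Function.update v i t) i) :
    t - s ≤ α * ((cOff v i t : ℝ) - (cOff v i s : ℝ) + 1) / m := by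
  have hm : 0 < m := i.pos
  have hm0 : (0:ℝ) < m := by exact_mod_cast hm
  have hmaxt := event_max' hα ht
  have hkey : α * ((cOff v i t : ℝ) - (cOff v i s : ℝ) + 1) / m
      = α * ((cOff v i t + 1 : ℕ) : ℝ) / m - α * ((cOff v i s : ℕ) : ℝ) / m := by
    push_cast; ring
  rcases Nat.eq_zero_or_pos (cOff v i s) with h0 | hpos
  · have h1 := hmaxt 0 (Nat.zero_le m)
    have h2 : slObj α (Function.update v i t) 0 = 0 := by
      simp [slObj, orderStat]
    rw [h2] at h1
    push_cast at h1
    rw [hkey]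
    have hz : α * ((cOff v i s : ℕ) : ℝ) / m = 0 := by rw [h0]; simp
    rw [hz]
    push_cast
    linarith
  · have hcsm : cOff v i s ≤ m := by have := cOff_le v i s; omega
    have h1 := hmaxt (cOff v i s) hcsm
    have h2 : orderStat (Function.update v i t) (cOff v i s) ≤ s :=
      orderStat_le_of hpos (le_cntLE_update v i t s)
    rw [slObj] at h1
    rw [hkey]
    linarith
  
lemma pair_ge {α : ℝ} (hα : 0 ≤ α) {m : ℕ} {v : Fin m → ℝ} {i : Fin m} {s t : ℝ}
    (hst : s ≤ t)
    (hs : isBd α (Function.update v i s) i) (ht : isBd α (Function.update v i t) i) :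
    α * ((cOff v i t : ℝ) - (cOff v i s : ℝ)) / m ≤ t - s := by
  have hm : 0 < m := i.pos
  have hm0 : (0:ℝ) < m := by exact_mod_cast hm
  have hmaxs := event_max' hα hs
  have h1 := hmaxs (cOff v i t + 1) (cOff_le v i t)
  have h2 : orderStat (Function.update v i s) (cOff v i t + 1) ≤ t := by
    refine orderStat_le_of (Nat.succ_le_succ (Nat.zero_le _)) ?_
    rw [cntLE_update_le v i hst]
  rw [slObj] at h1
  have hkey : α * ((cOff v i t : ℝ) - (cOff v i s : ℝ)) / m
      = α * ((cOff v i t + 1 : ℕ) : ℝ) / m - α * ((cOff v i s + 1 : ℕ) : ℝ) / m := by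
    push_cast; ring
  rw [hkey]
  linarith

lemma key_count {m : ℕ} {α : ℝ} (hα : 0 ≤ α) {L : ℕ} (hL : 1 ≤ L)
    (v : Fin m → ℝ) (i : Fin m) :
    ((Finset.univ.filter
        (fun a : Fin L => isBd α (Function.update v i (gridPt L a)) i)).card : ℝ)
      ≤ α * L / m + (m + 1) := by
  have hm : 0 < m := i.pos
  have hm0 : (0:ℝ) < m := by exact_mod_cast hm
  have hL0 : (0:ℝ) < L := by exact_mod_cast hL
  set A := Finset.univ.filter
    (fun a : Fin L => isBd α (Function.update v i (gridPt L a)) i) with hA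
  rcases A.eq_empty_or_nonempty with hAe | hAne
  · rw [hAe]
    simp only [Finset.card_empty, Nat.cast_zero]
    positivity
  set β : ℝ := α * L / m with hβ
  have hβ0 : 0 ≤ β := by positivity
  set cf : Fin L → ℕ := fun a => cOff v i (gridPt L a) with hcf
  set hfn : Fin L → ℤ := fun a => ((a:ℕ) : ℤ) + (cf a : ℤ) - ⌈β * ((cf a : ℕ) : ℝ)⌉ with hhfn
  have hgpos : ∀ a : Fin L, 0 < gridPt L a := by
    intro a; rw [gridPt]; positivity
  have hgmono : ∀ {a b : Fin L}, a ≤ b → gridPt L a ≤ gridPt L b := by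
    intro a b hab
    rw [gridPt, gridPt]
    have h1 : ((a:ℕ) : ℝ) + 1 ≤ ((b:ℕ) : ℝ) + 1 := by
      have h2 : (a:ℕ) ≤ (b:ℕ) := hab
      have h3 := (Nat.cast_le (α := ℝ)).2 h2
      linarith
    exact (div_le_div_iff_of_pos_right hL0).2 h1
  have hmemA : ∀ a ∈ A, isBd α (Function.update v i (gridPt L a)) i := by
    intro a ha
    exact (Finset.mem_filter.1 ha).2
  have hcmono : ∀ {a b : Fin L}, a ≤ b → cf a ≤ cf b := by
    intro a b hab
    exact cOff_mono v i (hgmono hab)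
  have hcbd : ∀ a : Fin L, cf a + 1 ≤ m := fun a => cOff_le v i _
  have hgdiff : ∀ a b : Fin L, gridPt L b - gridPt L a = (((b:ℕ):ℝ) - ((a:ℕ):ℝ)) / L := by
    intro a b
    rw [gridPt, gridPt]
    ring
  have hpair1 : ∀ a ∈ A, ∀ b ∈ A, a ≤ b →
      ((b:ℕ):ℝ) - ((a:ℕ):ℝ) ≤ β * ((cf b : ℝ) - (cf a : ℝ)) + β := by
    intro a ha b hb hab
    have h1 := pair_le hα (hgpos a) (hgmono hab) (hmemA a ha) (hmemA b hb)
    rw [hgdiff a b] at h1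
    have h2 := (div_le_iff₀ hL0).1 h1
    have h3 : α * ((cf b : ℝ) - (cf a : ℝ) + 1) / m * L
        = β * ((cf b : ℝ) - (cf a : ℝ)) + β := by rw [hβ]; ring
    rw [h3] at h2
    exact h2
  have hpair2 : ∀ a ∈ A, ∀ b ∈ A, a ≤ b →
      β * ((cf b : ℝ) - (cf a : ℝ)) ≤ ((b:ℕ):ℝ) - ((a:ℕ):ℝ) := by
    intro a ha b hb hab
    have h1 := pair_ge hα (hgmono hab) (hmemA a ha) (hmemA b hb)
    rw [hgdiff a b] at h1
    have h2 := (le_div_iff₀ hL0).1 h1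
    have h3 : α * ((cf b : ℝ) - (cf a : ℝ)) / m * L
        = β * ((cf b : ℝ) - (cf a : ℝ)) := by rw [hβ]; ring
    rw [h3] at h2
    exact h2
  have hsm : ∀ a ∈ A, ∀ b ∈ A, a < b → hfn a < hfn b := by
    intro a ha b hb hab
    have hcle := hcmono hab.le
    rcases eq_or_lt_of_le hcle with hcc | hcc
    · simp only [hhfn, ← hcc]
      have : ((a:ℕ) : ℤ) < ((b:ℕ) : ℤ) := by exact_mod_cast hab
      omega
    · have k1 : ⌈β * ((cf b : ℝ) - (cf a : ℝ))⌉ ≤ ((b:ℕ):ℤ) - ((a:ℕ):ℤ) := by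
        rw [Int.ceil_le]
        push_cast
        exact hpair2 a ha b hb hab.le
      have k2 : ⌈β * ((cf b : ℕ) : ℝ)⌉ ≤ ⌈β * ((cf a : ℕ) : ℝ)⌉
          + ⌈β * ((cf b : ℝ) - (cf a : ℝ))⌉ := by
        have he : β * ((cf b : ℕ) : ℝ) = β * ((cf a : ℕ) : ℝ) + β * ((cf b : ℝ) - (cf a : ℝ)) := by
          ring
        rw [he]
        exact Int.ceil_add_le _ _
      have k3 : ((cf a : ℕ) : ℤ) < ((cf b : ℕ) : ℤ) := by exact_mod_cast hcc
      simp only [hhfn]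
      linarith
  have hmono' : ∀ a ∈ A, ∀ b ∈ A, a ≤ b → hfn a ≤ hfn b := by
    intro a ha b hb hab
    rcases eq_or_lt_of_le hab with rfl | h
    · exact le_rfl
    · exact (hsm a ha b hb h).le
  obtain ⟨amin, hamin_mem, hamin_le⟩ : ∃ x ∈ A, ∀ y ∈ A, x ≤ y :=
    ⟨A.min' hAne, A.min'_mem hAne, fun y hy => A.min'_le y hy⟩
  obtain ⟨amax, hamax_mem, hamax_ge⟩ : ∃ x ∈ A, ∀ y ∈ A, y ≤ x :=
    ⟨A.max' hAne, A.max'_mem hAne, fun y hy => A.le_max' y hy⟩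
  have hmaps : ∀ a ∈ A, hfn a ∈ Finset.Icc (hfn amin) (hfn amax) := by
    intro a ha
    exact Finset.mem_Icc.2 ⟨hmono' amin hamin_mem a ha (hamin_le a ha),
      hmono' a ha amax hamax_mem (hamax_ge a ha)⟩
  have hinj : Set.InjOn hfn ↑A := by
    intro a ha b hb hab
    rcases lt_trichotomy a b with h | h | h
    · exact absurd hab (ne_of_lt (hsm a ha b hb h))
    · exact h
    · exact absurd hab.symm (ne_of_lt (hsm b hb a ha h))
  have hcard : A.card ≤ (Finset.Icc (hfn amin) (hfn amax)).card :=
    Finset.card_le_card_of_injOn hfn hmaps hinj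
  rw [Int.card_Icc] at hcard
  have hge : hfn amin ≤ hfn amax := hmono' amin hamin_mem amax hamax_mem (hamin_le amax hamax_mem)
  have htn : ((hfn amax + 1 - hfn amin).toNat : ℤ) = hfn amax + 1 - hfn amin :=
    Int.toNat_of_nonneg (by omega)
  have hcard2 : (A.card : ℝ) ≤ (hfn amax : ℝ) + 1 - (hfn amin : ℝ) := by
    have : ((A.card : ℤ) : ℝ) ≤ (((hfn amax + 1 - hfn amin).toNat : ℤ) : ℝ) := by
      exact_mod_cast hcard
    rw [htn] at this
    push_cast at this ⊢
    linarith
  -- final bound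
  have hf1 := hpair1 amin hamin_mem amax hamax_mem (hamin_le amax hamax_mem)
  have hf2 : β * ((cf amax : ℕ) : ℝ) ≤ (⌈β * ((cf amax : ℕ) : ℝ)⌉ : ℝ) := Int.le_ceil _
  have hf3 : (⌈β * ((cf amin : ℕ) : ℝ)⌉ : ℝ) ≤ β * ((cf amin : ℕ) : ℝ) + 1 :=
    (Int.ceil_lt_add_one _).le
  have hf4 : (cf amax : ℝ) + 1 ≤ (m : ℝ) := by exact_mod_cast hcbd amax
  have hf5 : (0:ℝ) ≤ (cf amin : ℝ) := Nat.cast_nonneg _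
  have hf6 : β * ((cf amax : ℕ) : ℝ) - β * ((cf amin : ℕ) : ℝ)
      = β * ((cf amax : ℝ) - (cf amin : ℝ)) := by ring
  have hexp : (hfn amax : ℝ) = ((amax:ℕ):ℝ) + (cf amax : ℝ) - (⌈β * ((cf amax : ℕ) : ℝ)⌉ : ℝ) := by
    simp only [hhfn]; push_cast; ring
  have hexp2 : (hfn amin : ℝ) = ((amin:ℕ):ℝ) + (cf amin : ℝ) - (⌈β * ((cf amin : ℕ) : ℝ)⌉ : ℝ) := by
    simp only [hhfn]; push_cast; ring
  rw [hexp, hexp2] at hcard2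
  have : (A.card : ℝ) ≤ β + (m + 1) := by linarith
  rw [hβ] at this
  exact this

lemma key_sum {m : ℕ} {α : ℝ} (hα : 0 ≤ α) {L : ℕ} (hL : 1 ≤ L)
    (v : Fin m → ℝ) (i : Fin m) :
    ∑ a : Fin L, (if isBd α (Function.update v i (gridPt L a)) i then
        (({j : Fin m | Function.update v i (gridPt L a) j
            = slTau α (Function.update v i (gridPt L a))}.ncard : ℝ))⁻¹ else 0)
      ≤ α * L / m + (m + 1) := by
  have hbound : ∀ a : Fin L, (if isBd α (Function.update v i (gridPt L a)) i then
      (({j : Fin m | Function.update v i (gridPt L a) j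
          = slTau α (Function.update v i (gridPt L a))}.ncard : ℝ))⁻¹ else 0)
      ≤ (if isBd α (Function.update v i (gridPt L a)) i then (1:ℝ) else 0) := by
    intro a
    by_cases hE : isBd α (Function.update v i (gridPt L a)) i
    · rw [if_pos hE, if_pos hE]
      have h1 : i ∈ {j : Fin m | Function.update v i (gridPt L a) j
          = slTau α (Function.update v i (gridPt L a))} := hE.2
      have h2 : 1 ≤ ({j : Fin m | Function.update v i (gridPt L a) j
          = slTau α (Function.update v i (gridPt L a))}.ncard) :=
        (Set.ncard_pos (Set.toFinite _)).2 ⟨i, h1⟩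
      have h3 : (1:ℝ) ≤ (({j : Fin m | Function.update v i (gridPt L a) j
          = slTau α (Function.update v i (gridPt L a))}.ncard : ℝ)) := by exact_mod_cast h2
      exact inv_le_one_of_one_le₀ h3
    · rw [if_neg hE, if_neg hE]
  calc ∑ a : Fin L, (if isBd α (Function.update v i (gridPt L a)) i then
        (({j : Fin m | Function.update v i (gridPt L a) j
            = slTau α (Function.update v i (gridPt L a))}.ncard : ℝ))⁻¹ else 0)
      ≤ ∑ a : Fin L, (if isBd α (Function.update v i (gridPt L a)) i then (1:ℝ) else 0) :=
        Finset.sum_le_sum (fun a _ => hbound a)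
    _ = ((Finset.univ.filter
        (fun a : Fin L => isBd α (Function.update v i (gridPt L a)) i)).card : ℝ) := by
        rw [Finset.sum_boole]
    _ ≤ α * L / m + (m + 1) := key_count hα hL v i

/-- the grid vector attached to an index vector -/
noncomputable def vecOf {m L : ℕ} (ν : Fin m → Fin L) : Fin m → ℝ := fun j => gridPt L (ν j)

/-- the bFDR integrand -/
noncomputable def Gfun (α : ℝ) {m : ℕ} (H0 : Finset (Fin m)) (w : Fin m → ℝ) : ℝ :=
  if 1 ≤ slR α w then
      ({i : Fin m | i ∈ H0 ∧ w i = slTau α w}.ncard : ℝ)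
        / ({i : Fin m | w i = slTau α w}.ncard : ℝ)
    else 0

/-- the per-null-contribution to the bFDR integrand -/
noncomputable def Ffun (α : ℝ) {m : ℕ} (i : Fin m) (w : Fin m → ℝ) : ℝ :=
  if isBd α w i then (({j : Fin m | w j = slTau α w}.ncard : ℝ))⁻¹ else 0

lemma Gfun_eq_sum (α : ℝ) {m : ℕ} (H0 : Finset (Fin m)) (w : Fin m → ℝ) :
    Gfun α H0 w = ∑ i ∈ H0, Ffun α i w := by
  classical
  by_cases hR : 1 ≤ slR α w
  · rw [Gfun, if_pos hR]
    have h1 : ∀ i, Ffun α i w = if w i = slTau α w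
        then (({j : Fin m | w j = slTau α w}.ncard : ℝ))⁻¹ else 0 := by
      intro i
      rw [Ffun]
      by_cases h : w i = slTau α w
      · rw [if_pos ⟨hR, h⟩, if_pos h]
      · rw [if_neg (fun hc => h hc.2), if_neg h]
    rw [Finset.sum_congr rfl (fun i _ => h1 i), Finset.sum_ite, Finset.sum_const,
      Finset.sum_const_zero, add_zero]
    have h2 : {i : Fin m | i ∈ H0 ∧ w i = slTau α w}.ncard
        = (H0.filter (fun i => w i = slTau α w)).card := by
      rw [← Set.ncard_coe_finset]
      congr 1
      ext j
      simp [Finset.mem_filter]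
    rw [h2, div_eq_mul_inv, nsmul_eq_mul]
  · rw [Gfun, if_neg hR]
    symm
    apply Finset.sum_eq_zero
    intro i _
    rw [Ffun, if_neg (fun hc => hR hc.1)]

lemma Ffun_nonneg (α : ℝ) {m : ℕ} (i : Fin m) (w : Fin m → ℝ) : 0 ≤ Ffun α i w := by
  rw [Ffun]
  split
  · positivity
  · exact le_rfl

lemma key_sum' {m : ℕ} {α : ℝ} (hα : 0 ≤ α) {L : ℕ} (hL : 1 ≤ L)
    (v : Fin m → ℝ) (i : Fin m) :
    ∑ a : Fin L, Ffun α i (Function.update v i (gridPt L a)) ≤ α * L / m + (m + 1) := by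
  have h := key_sum hα hL v i
  refine le_trans (le_of_eq (Finset.sum_congr rfl (fun a _ => ?_))) h
  rw [Ffun]

end Stmt11Aux

open Stmt11Aux in
/-- Discrete-uniform nulls.  For fixed `m` and `α`, there are `C` and `L₀`
(depending only on `m` and `α`) such that for every grid size `L ≥ L₀` and every model of
`m` independent p-values supported on the grid `{1/L, ..., L/L}` whose nulls are uniform
on the grid, the boundary FDR of the support-line procedure (ties broken uniformly at
random) is at most `π̄₀ α + C m²/L`. -/
theorem stmt11 (m : ℕ) (hm : 1 ≤ m) (α : ℝ) (hα : α ∈ Icc (0 : ℝ) 1) :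
    ∃ C : ℝ, ∃ L0 : ℕ, ∀ L : ℕ, L0 ≤ L →
    ∀ (Ω : Type) [MeasurableSpace Ω] (μ : Measure Ω) [IsProbabilityMeasure μ]
      (p : Fin m → Ω → ℝ) (H0 : Finset (Fin m)),
    (∀ i, Measurable (p i)) →
    (∀ i ω, ∃ ℓ : ℕ, 1 ≤ ℓ ∧ ℓ ≤ L ∧ p i ω = (ℓ : ℝ) / L) →
    iIndepFun p μ →
    (∀ i ∈ H0, ∀ ℓ : ℕ, 1 ≤ ℓ → ℓ ≤ L →
      μ {ω | p i ω = (ℓ : ℝ) / L} = (L : ENNReal)⁻¹) →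
    bFDRsl μ p H0 α ≤ (H0.card : ℝ) / m * α + C * m ^ 2 / L := by
  obtain ⟨hα0, hα1⟩ := hα
  refine ⟨2, 1, ?_⟩
  intro L hL Ω mΩ μ hprob p H0 hmeas hsupp hindep hnull
  classical
  have hL0 : (0:ℝ) < L := by exact_mod_cast hL
  have hLne : (L:ℝ) ≠ 0 := ne_of_gt hL0
  have hm0 : (0:ℝ) < m := by exact_mod_cast hm
  -- atoms of the grid partition
  set E : (Fin m → Fin L) → Set Ω := fun ν => ⋂ j, p j ⁻¹' {gridPt L (ν j)} with hE
  have hEmeas : ∀ ν, MeasurableSet (E ν) := fun ν =>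
    MeasurableSet.iInter (fun j => hmeas j (measurableSet_singleton _))
  have hg_inj : ∀ {a b : Fin L}, gridPt L a = gridPt L b → a = b := by
    intro a b hab
    have h1 := congrArg (fun r : ℝ => r * L) hab
    simp only [gridPt, div_mul_cancel₀ _ hLne] at h1
    have h2 : (a:ℕ) + 1 = (b:ℕ) + 1 := by exact_mod_cast h1
    exact Fin.ext (by omega)
  have hgrid : ∀ (j : Fin m) (ω : Ω), ∃ a : Fin L, p j ω = gridPt L a := by
    intro j ω
    obtain ⟨ℓ, hℓ1, hℓ2, hℓ3⟩ := hsupp j ω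
    refine ⟨⟨ℓ - 1, by omega⟩, ?_⟩
    rw [hℓ3, gridPt]
    congr 1
    have : ((ℓ - 1 : ℕ) : ℝ) = (ℓ : ℝ) - 1 := by
      push_cast [Nat.cast_sub hℓ1]
      ring
    simp only [this]
    ring
  have hpart : ∀ ω : Ω, ∃ ν : Fin m → Fin L, ω ∈ E ν ∧ (fun j => p j ω) = vecOf ν
      ∧ ∀ ν' : Fin m → Fin L, ω ∈ E ν' → ν' = ν := by
    intro ω
    choose ν hν using fun j => hgrid j ω
    refine ⟨ν, ?_, ?_, ?_⟩
    · exact Set.mem_iInter.2 (fun j => hν j)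
    · funext j
      exact hν j
    · intro ν' hν'
      funext j
      have h1 := Set.mem_iInter.1 hν' j
      simp only [Set.mem_preimage, Set.mem_singleton_iff] at h1
      exact hg_inj ((hν j).symm.trans h1).symm
  -- integral as finite sum over atoms
  have hint : bFDRsl μ p H0 α = ∫ ω, Gfun α H0 (fun j => p j ω) ∂μ := rfl
  have hint2 : bFDRsl μ p H0 α
      = ∑ ν : Fin m → Fin L, Gfun α H0 (vecOf ν) * (μ (E ν)).toReal := by
    rw [hint]
    have hptw : (fun ω => Gfun α H0 (fun j => p j ω))
        = fun ω => ∑ ν : Fin m → Fin L,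
            (E ν).indicator (fun _ => Gfun α H0 (vecOf ν)) ω := by
      funext ω
      obtain ⟨ν₀, hmem, heq, huniq⟩ := hpart ω
      rw [heq, Finset.sum_eq_single ν₀]
      · rw [Set.indicator_of_mem hmem]
      · intro ν _ hne
        apply Set.indicator_of_notMem
        intro hmem'
        exact hne (huniq ν hmem')
      · intro h
        exact absurd (Finset.mem_univ ν₀) h
    rw [hptw, integral_finset_sum _ (fun ν _ => (integrable_const _).indicator (hEmeas ν))]
    refine Finset.sum_congr rfl (fun ν _ => ?_)
    rw [integral_indicator_const _ (hEmeas ν), smul_eq_mul, mul_comm]; rfl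
  -- weights
  set wgt : Fin m → Fin L → ℝ := fun j a => (μ (p j ⁻¹' {gridPt L a})).toReal with hwgt
  have hwgt_nonneg : ∀ j a, 0 ≤ wgt j a := fun j a => ENNReal.toReal_nonneg
  have hEprod : ∀ ν, (μ (E ν)).toReal = ∏ j, wgt j (ν j) := by
    intro ν
    have h1 := hindep.measure_inter_preimage_eq_mul (S := Finset.univ)
      (sets := fun j => {gridPt L (ν j)}) (fun j _ => measurableSet_singleton _)
    have h2 : E ν = ⋂ j ∈ Finset.univ, p j ⁻¹' {gridPt L (ν j)} := by
      ext ω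
      simp [hE]
    rw [h2, h1, ENNReal.toReal_prod]
  have hwsum : ∀ j : Fin m, ∑ a : Fin L, wgt j a = 1 := by
    intro j
    have hdisj : Set.PairwiseDisjoint (↑(Finset.univ : Finset (Fin L)))
        (fun a => p j ⁻¹' {gridPt L a}) := by
      intro a _ b _ hab
      refine Set.disjoint_left.2 ?_
      intro ω h1 h2
      simp only [Set.mem_preimage, Set.mem_singleton_iff] at h1 h2
      exact hab (hg_inj (h1.symm.trans h2))
    have hmeas' : ∀ a ∈ (Finset.univ : Finset (Fin L)),
        MeasurableSet (p j ⁻¹' {gridPt L a}) :=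
      fun a _ => hmeas j (measurableSet_singleton _)
    have h1 := measure_biUnion_finset (μ := μ) hdisj hmeas'
    have hcover : (⋃ a ∈ (Finset.univ : Finset (Fin L)), p j ⁻¹' {gridPt L a}) = Set.univ := by
      ext ω
      simp only [Set.mem_iUnion, Set.mem_preimage, Set.mem_singleton_iff, Set.mem_univ,
        iff_true, Finset.mem_univ, exists_prop, true_and]
      exact hgrid j ω
    rw [hcover, measure_univ] at h1
    calc ∑ a : Fin L, wgt j a
        = (∑ a : Fin L, μ (p j ⁻¹' {gridPt L a})).toReal :=
          (ENNReal.toReal_sum (fun a _ => measure_ne_top μ _)).symm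
      _ = 1 := by rw [← h1, ENNReal.toReal_one]
  have hwnull : ∀ j ∈ H0, ∀ a : Fin L, wgt j a = (L:ℝ)⁻¹ := by
    intro j hj a
    have h1 := hnull j hj ((a:ℕ) + 1) (by omega) (by omega)
    have hcast : (((a:ℕ) + 1 : ℕ) : ℝ) = ((a:ℕ) : ℝ) + 1 := by push_cast; ring
    have h2 : p j ⁻¹' {gridPt L a} = {ω | p j ω = (((a:ℕ) + 1 : ℕ) : ℝ) / L} := by
      ext ω
      simp only [Set.mem_preimage, Set.mem_singleton_iff, Set.mem_setOf_eq, gridPt, hcast]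
    rw [hwgt]
    simp only []
    rw [h2, h1]
    simp [ENNReal.toReal_inv]
  -- split the integrand over the nulls
  rw [hint2]
  have hsplit : ∀ ν : Fin m → Fin L, Gfun α H0 (vecOf ν) * (μ (E ν)).toReal
      = ∑ i ∈ H0, Ffun α i (vecOf ν) * ∏ j, wgt j (ν j) := by
    intro ν
    rw [hEprod, Gfun_eq_sum, Finset.sum_mul]
  rw [Finset.sum_congr rfl (fun ν _ => hsplit ν), Finset.sum_comm]
  -- per-null bound
  have hkey : ∀ i ∈ H0, ∑ ν : Fin m → Fin L, Ffun α i (vecOf ν) * ∏ j, wgt j (ν j)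
      ≤ α / m + (m + 1) / L := by
    intro i hi
    set e := (Equiv.funSplitAt i (Fin L)).symm with he
    have heval : ∀ (a : Fin L) (g : {j // j ≠ i} → Fin L) (j : Fin m),
        e (a, g) j = if h : j = i then a else g ⟨j, h⟩ := by
      intro a g j
      rw [he]
      exact Equiv.funSplitAt_symm_apply i (Fin L) (a, g) j
    have hei : ∀ (a : Fin L) (g : {j // j ≠ i} → Fin L), e (a, g) i = a := by
      intro a g
      rw [heval]
      simp
    set a0 : Fin L := ⟨0, hL⟩ with ha0
    have hupd : ∀ (a : Fin L) (g : {j // j ≠ i} → Fin L),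
        vecOf (e (a, g)) = Function.update (vecOf (e (a0, g))) i (gridPt L a) := by
      intro a g
      funext j
      by_cases hj : j = i
      · subst hj
        rw [Function.update_self]
        show gridPt L (e (a, g) j) = gridPt L a
        rw [hei]
      · rw [Function.update_of_ne hj]
        show gridPt L (e (a, g) j) = gridPt L (e (a0, g) j)
        rw [heval, heval]
        simp [hj]
    have hprodsplit : ∀ (a : Fin L) (g : {j // j ≠ i} → Fin L),
        (∏ j, wgt j (e (a, g) j)) = (L:ℝ)⁻¹ * ∏ jj : {j // j ≠ i}, wgt jj.1 (g jj) := by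
      intro a g
      rw [← Finset.mul_prod_erase Finset.univ _ (Finset.mem_univ i)]
      have hia : wgt i (e (a, g) i) = (L:ℝ)⁻¹ := by
        rw [hei]
        exact hwnull i hi a
      rw [hia]
      congr 1
      rw [Finset.prod_subtype (Finset.univ.erase i) (p := fun j => j ≠ i)
        (by intro j; simp [Finset.mem_erase]) (fun j => wgt j (e (a, g) j))]
      refine Finset.prod_congr rfl (fun jj _ => ?_)
      rw [heval]
      simp [jj.2]
    have hstep1 : ∑ ν : Fin m → Fin L, Ffun α i (vecOf ν) * ∏ j, wgt j (ν j)
        = ∑ g : {j // j ≠ i} → Fin L, ∑ a : Fin L,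
            (L:ℝ)⁻¹ * (Ffun α i (Function.update (vecOf (e (a0, g))) i (gridPt L a))
              * ∏ jj : {j // j ≠ i}, wgt jj.1 (g jj)) := by
      rw [← Equiv.sum_comp e (fun ν => Ffun α i (vecOf ν) * ∏ j, wgt j (ν j)),
        Fintype.sum_prod_type, Finset.sum_comm]
      refine Finset.sum_congr rfl (fun g _ => Finset.sum_congr rfl (fun a _ => ?_))
      rw [hupd, hprodsplit]
      ring
    rw [hstep1]
    have hstep2 : ∀ g : {j // j ≠ i} → Fin L,
        ∑ a : Fin L, (L:ℝ)⁻¹ * (Ffun α i (Function.update (vecOf (e (a0, g))) i (gridPt L a))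
              * ∏ jj : {j // j ≠ i}, wgt jj.1 (g jj))
          ≤ (α / m + (m + 1) / L) * ∏ jj : {j // j ≠ i}, wgt jj.1 (g jj) := by
      intro g
      have hprod_nonneg : 0 ≤ ∏ jj : {j // j ≠ i}, wgt jj.1 (g jj) :=
        Finset.prod_nonneg (fun jj _ => hwgt_nonneg _ _)
      have h1 : ∑ a : Fin L, (L:ℝ)⁻¹ * (Ffun α i (Function.update (vecOf (e (a0, g))) i
            (gridPt L a)) * ∏ jj : {j // j ≠ i}, wgt jj.1 (g jj))
          = ((L:ℝ)⁻¹ * ∑ a : Fin L, Ffun α i (Function.update (vecOf (e (a0, g))) i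
            (gridPt L a))) * ∏ jj : {j // j ≠ i}, wgt jj.1 (g jj) := by
        rw [Finset.mul_sum, Finset.sum_mul]
        exact Finset.sum_congr rfl (fun a _ => by ring)
      rw [h1]
      refine mul_le_mul_of_nonneg_right ?_ hprod_nonneg
      have h2 := key_sum' hα0 hL (vecOf (e (a0, g))) i
      have hmne : (m:ℝ) ≠ 0 := ne_of_gt hm0
      have h3 : (L:ℝ)⁻¹ * (α * L / m + (m + 1)) = α / m + (m + 1) / L := by
        rw [mul_add, show (L:ℝ)⁻¹ * (α * L / m) = (α / m) * ((L:ℝ)⁻¹ * L) from by ring,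
          inv_mul_cancel₀ hLne, mul_one, inv_mul_eq_div]
      rw [← h3]
      refine mul_le_mul_of_nonneg_left h2 (by positivity)
    calc ∑ g : {j // j ≠ i} → Fin L, ∑ a : Fin L,
            (L:ℝ)⁻¹ * (Ffun α i (Function.update (vecOf (e (a0, g))) i (gridPt L a))
              * ∏ jj : {j // j ≠ i}, wgt jj.1 (g jj))
        ≤ ∑ g : {j // j ≠ i} → Fin L,
            (α / m + (m + 1) / L) * ∏ jj : {j // j ≠ i}, wgt jj.1 (g jj) :=
          Finset.sum_le_sum (fun g _ => hstep2 g)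
      _ = (α / m + (m + 1) / L) * ∑ g : {j // j ≠ i} → Fin L,
            ∏ jj : {j // j ≠ i}, wgt jj.1 (g jj) := by rw [Finset.mul_sum]
      _ = α / m + (m + 1) / L := by
          have hsum1 : ∑ g : {j // j ≠ i} → Fin L, ∏ jj : {j // j ≠ i}, wgt jj.1 (g jj) = 1 := by
            rw [← Fintype.piFinset_univ, ← Finset.prod_univ_sum]
            rw [Finset.prod_congr rfl (fun jj _ => hwsum jj.1)]
            exact Finset.prod_const_one
          rw [hsum1, mul_one]
  -- conclude
  have hH0m : (H0.card : ℝ) ≤ m := by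
    have h := Finset.card_le_univ H0
    simp only [Finset.card_univ, Fintype.card_fin] at h
    exact_mod_cast h
  calc ∑ i ∈ H0, ∑ ν : Fin m → Fin L, Ffun α i (vecOf ν) * ∏ j, wgt j (ν j)
      ≤ ∑ i ∈ H0, (α / m + (m + 1) / L) := Finset.sum_le_sum hkey
    _ = (H0.card : ℝ) * (α / m + (m + 1) / L) := by
        rw [Finset.sum_const, nsmul_eq_mul]
    _ ≤ (H0.card : ℝ) / m * α + 2 * m ^ 2 / L := by
        have h1 : (H0.card : ℝ) * (α / m) = (H0.card : ℝ) / m * α := by ring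
        have hm1 : (1:ℝ) ≤ m := by exact_mod_cast hm
        have h2 : (H0.card : ℝ) * ((m + 1) / L) ≤ 2 * m ^ 2 / L := by
          rw [show (H0.card : ℝ) * (((m:ℝ) + 1) / L) = ((H0.card : ℝ) * ((m:ℝ) + 1)) / L from
            by ring]
          refine (div_le_div_iff_of_pos_right hL0).2 ?_
          have h4 : (H0.card : ℝ) * ((m:ℝ) + 1) ≤ (m:ℝ) * (2 * m) := by
            have h5 : (0:ℝ) ≤ (m:ℝ) + 1 := by linarith
            have h6 : ((m:ℝ) + 1) ≤ 2 * m := by linarith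
            calc (H0.card : ℝ) * ((m:ℝ) + 1) ≤ (m:ℝ) * ((m:ℝ) + 1) :=
                  mul_le_mul_of_nonneg_right hH0m h5
              _ ≤ (m:ℝ) * (2 * m) := mul_le_mul_of_nonneg_left h6 (by linarith)
          nlinarith [h4]
        rw [mul_add, h1]
        exact (add_le_add_iff_left _).2 h2
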